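/- Let W_n (n ≥ 3) be the wheel graph, which has n + 1 vertices and 2n edges. Then RLKV1(W_n) = n(324n^2 + 3^n(3^n + 9n)), RLKV2(W_n) = n(162n^2 + 3^n(3^n − 9n)), RLKV3(W_n) = n(81n^2 + (9n + 1)·3^n − 9n), and RLKV4(W_n) = n·|3^n − 9n|·3^n·9n. -/

import Mathlib

open Finset SimpleGraph

variable {V : Type*}

/-- The degree of a vertex, as a real number. -/
noncomputable def deg [Fintype V] (G : SimpleGraph V) (v : V) : ℝ :=
  haveI := Classical.decEq V
  haveI : DecidableRel G.Adj := Classical.decRel _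
  (G.degree v : ℝ)

/-- Sum of a symmetric function of the two endpoints, over the edges of `G`
(each edge counted once). -/
noncomputable def edgeSum [Fintype V] (G : SimpleGraph V)
    (f : V → V → ℝ) (hf : ∀ u v, f u v = f v u) : ℝ :=
  haveI := Classical.decEq V
  haveI : DecidableRel G.Adj := Classical.decRel _
  ∑ e ∈ G.edgeFinset, Sym2.lift ⟨f, hf⟩ e

/-- The wheel graph `Wₙ`: the join of a single hub vertex (`none`) with the
cycle `Cₙ` (on the vertices `some i`). -/
def wheelGraph (n : ℕ) : SimpleGraph (Option (Fin n)) :=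
  SimpleGraph.fromRel (fun u v =>
    u = none ∨ ∃ i j, u = some i ∧ v = some j ∧ (SimpleGraph.cycleGraph n).Adj i j)

/-- `M_G(u)`: the product of the degrees of all vertices adjacent to `u`, as a real number. -/
noncomputable def mdeg [Fintype V] (G : SimpleGraph V) (u : V) : ℝ :=
  haveI := Classical.decEq V
  haveI : DecidableRel G.Adj := Classical.decRel _
  ∏ w ∈ G.neighborFinset u, (G.degree w : ℝ)

/-- The first Rehan–Lanel KV index:
`RLKV₁(G) = Σ_{uv∈E(G)} (M(u)² + M(v)² + M(u)M(v))`. -/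
noncomputable def RLKV1 [Fintype V] (G : SimpleGraph V) : ℝ :=
  edgeSum G (fun u v => mdeg G u ^ 2 + mdeg G v ^ 2 + mdeg G u * mdeg G v)
    (fun u v => by ring)

/-- The second Rehan–Lanel KV index:
`RLKV₂(G) = Σ_{uv∈E(G)} (M(u)² + M(v)² − M(u)M(v))`. -/
noncomputable def RLKV2 [Fintype V] (G : SimpleGraph V) : ℝ :=
  edgeSum G (fun u v => mdeg G u ^ 2 + mdeg G v ^ 2 - mdeg G u * mdeg G v)
    (fun u v => by ring)

/-- The third Rehan–Lanel KV index:
`RLKV₃(G) = Σ_{uv∈E(G)} (|M(u) − M(v)| + M(u)M(v))`. -/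
noncomputable def RLKV3 [Fintype V] (G : SimpleGraph V) : ℝ :=
  edgeSum G (fun u v => |mdeg G u - mdeg G v| + mdeg G u * mdeg G v)
    (fun u v => by (try dsimp only); rw [abs_sub_comm]; ring)

/-- The fourth Rehan–Lanel KV index:
`RLKV₄(G) = Σ_{uv∈E(G)} |M(u) − M(v)|·M(u)M(v)`. -/
noncomputable def RLKV4 [Fintype V] (G : SimpleGraph V) : ℝ :=
  edgeSum G (fun u v => |mdeg G u - mdeg G v| * (mdeg G u * mdeg G v))
    (fun u v => by (try dsimp only); rw [abs_sub_comm]; ring)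


lemma nine_mul_le_pow {n : ℕ} (hn : 3 ≤ n) : (9 : ℝ) * n ≤ 3 ^ n := by
  have h : 9 * n ≤ 3 ^ n := by
    induction n, hn using Nat.le_induction with
    | base => norm_num
    | succ m hm ih =>
      have : 3 ^ (m + 1) = 3 * 3 ^ m := by ring
      omega
  calc (9 : ℝ) * n = ((9 * n : ℕ) : ℝ) := by push_cast; ring
    _ ≤ ((3 ^ n : ℕ) : ℝ) := by exact_mod_cast Nat.cast_le.mpr h
    _ = 3 ^ n := by push_cast; ring

lemma wheel_adj_none_some {n : ℕ} (i : Fin n) : (wheelGraph n).Adj none (some i) := by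
  simp [wheelGraph]

lemma wheel_adj_some_some {n : ℕ} {i j : Fin n} :
    (wheelGraph n).Adj (some i) (some j) ↔ (SimpleGraph.cycleGraph n).Adj i j := by
  constructor
  · rintro ⟨hne, h | h⟩
    · rcases h with h | ⟨a, b, ha, hb, hab⟩
      · exact absurd h (by simp)
      · cases ha; cases hb; exact hab
    · rcases h with h | ⟨a, b, ha, hb, hab⟩
      · exact absurd h (by simp)
      · cases ha; cases hb; exact hab.symm
  · intro h
    exact ⟨by simpa using h.ne, Or.inl (Or.inr ⟨i, j, rfl, rfl, h⟩)⟩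

lemma wheel_nbr_none {n : ℕ} [DecidableRel (wheelGraph n).Adj] :
    (wheelGraph n).neighborFinset none = Finset.univ.image some := by
  ext v
  cases v with
  | none => simp [mem_neighborFinset]
  | some i => simp [mem_neighborFinset, wheel_adj_none_some]

lemma wheel_nbr_some {n : ℕ} [DecidableRel (wheelGraph n).Adj]
    [DecidableRel (SimpleGraph.cycleGraph n).Adj] (i : Fin n) :
    (wheelGraph n).neighborFinset (some i) =
      insert none (((SimpleGraph.cycleGraph n).neighborFinset i).image some) := by
  ext v
  cases v with
  | none => simp [mem_neighborFinset, (wheel_adj_none_some i).symm]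
  | some j => simp [mem_neighborFinset, wheel_adj_some_some, adj_comm]

lemma wheel_degree_none {n : ℕ} [DecidableRel (wheelGraph n).Adj] :
    (wheelGraph n).degree none = n := by
  rw [SimpleGraph.degree, wheel_nbr_none,
    Finset.card_image_of_injective _ (Option.some_injective _)]
  simp

lemma wheel_degree_some {n : ℕ} (hn : 3 ≤ n) [DecidableRel (wheelGraph n).Adj]
    (i : Fin n) : (wheelGraph n).degree (some i) = 3 := by
  classical
  obtain ⟨m, rfl⟩ : ∃ m, n = m + 3 := ⟨n - 3, by omega⟩
  rw [SimpleGraph.degree, wheel_nbr_some, Finset.card_insert_of_notMem (by simp),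
    Finset.card_image_of_injective _ (Option.some_injective _)]
  have : (SimpleGraph.cycleGraph (m + 3)).degree i = 2 := cycleGraph_degree_three_le
  rw [SimpleGraph.degree] at this
  omega

lemma mdeg_wheel_none {n : ℕ} (hn : 3 ≤ n) : mdeg (wheelGraph n) none = 3 ^ n := by
  unfold mdeg
  rw [@wheel_nbr_none n (Classical.decRel _),
    Finset.prod_image (by simp [Option.some_injective])]
  rw [Finset.prod_congr rfl (fun j _ => by rw [@wheel_degree_some _ hn (Classical.decRel _) j]), Finset.prod_const]
  simp

lemma mdeg_wheel_some {n : ℕ} (hn : 3 ≤ n) (i : Fin n) :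
    mdeg (wheelGraph n) (some i) = 9 * n := by
  unfold mdeg
  obtain ⟨m, rfl⟩ : ∃ m, n = m + 3 := ⟨n - 3, by omega⟩
  rw [@wheel_nbr_some (m + 3) (Classical.decRel _) _ i, Finset.prod_insert (by simp),
    Finset.prod_image (by simp [Option.some_injective]), @wheel_degree_none _ (Classical.decRel _)]
  have hc : ((SimpleGraph.cycleGraph (m + 3)).neighborFinset i).card = 2 :=
    cycleGraph_degree_three_le
  rw [Finset.prod_congr rfl (fun j _ => by rw [@wheel_degree_some _ hn (Classical.decRel _) j]),
    Finset.prod_const, hc]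
  push_cast
  ring

lemma wheel_card_edges {n : ℕ} (hn : 3 ≤ n) [DecidableRel (wheelGraph n).Adj] :
    (wheelGraph n).edgeFinset.card = 2 * n := by
  have h := (wheelGraph n).sum_degrees_eq_twice_card_edges
  rw [Fintype.sum_option, wheel_degree_none] at h
  rw [Finset.sum_congr rfl (fun j _ => wheel_degree_some hn j), Finset.sum_const] at h
  simp only [Finset.card_univ, Fintype.card_fin, smul_eq_mul] at h
  omega

lemma sum_edges_wheel {n : ℕ} (hn : 3 ≤ n) [DecidableRel (wheelGraph n).Adj]
    (g : Sym2 (Option (Fin n)) → ℝ) (A B : ℝ)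
    (hA : ∀ i : Fin n, g s(none, some i) = A)
    (hB : ∀ i j : Fin n, (wheelGraph n).Adj (some i) (some j) → g s(some i, some j) = B) :
    ∑ e ∈ (wheelGraph n).edgeFinset, g e = n * A + n * B := by
  rw [← Finset.sum_filter_add_sum_filter_not (wheelGraph n).edgeFinset (fun e => none ∈ e)]
  have h1 : (wheelGraph n).edgeFinset.filter (fun e => none ∈ e) = (wheelGraph n).incidenceFinset none := by
    rw [incidenceFinset_eq_filter]
  have hcard1 : ((wheelGraph n).edgeFinset.filter (fun e => none ∈ e)).card = n := by
    rw [h1, card_incidenceFinset_eq_degree, wheel_degree_none]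
  have hcard2 : ((wheelGraph n).edgeFinset.filter (fun e => ¬ none ∈ e)).card = n := by
    have := Finset.card_filter_add_card_filter_not
      (s := (wheelGraph n).edgeFinset) (p := fun e => none ∈ e)
    rw [hcard1, wheel_card_edges hn] at this
    omega
  have hv1 : ∀ e ∈ (wheelGraph n).edgeFinset.filter (fun e => none ∈ e), g e = A := by
    intro e he
    rw [Finset.mem_filter, SimpleGraph.mem_edgeFinset] at he
    obtain ⟨he, hne⟩ := he
    induction e with
    | _ u v =>
      rw [SimpleGraph.mem_edgeSet] at he
      rcases Sym2.mem_iff.mp hne with rfl | rfl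
      · match v, he with
        | some j, he => exact hA j
      · match u, he with
        | some j, he => rw [Sym2.eq_swap]; exact hA j
  have hv2 : ∀ e ∈ (wheelGraph n).edgeFinset.filter (fun e => ¬ none ∈ e), g e = B := by
    intro e he
    rw [Finset.mem_filter, SimpleGraph.mem_edgeFinset] at he
    obtain ⟨he, hne⟩ := he
    induction e with
    | _ u v =>
      rw [SimpleGraph.mem_edgeSet] at he
      simp only [Sym2.mem_iff, not_or] at hne
      match u, v, he, hne with
      | some i, some j, he, _ => exact hB i j he
  rw [Finset.sum_congr rfl hv1, Finset.sum_congr rfl hv2, Finset.sum_const,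
    Finset.sum_const, hcard1, hcard2]
  simp [mul_comm]

lemma edgeSum_wheel {n : ℕ} (hn : 3 ≤ n) (f : Option (Fin n) → Option (Fin n) → ℝ)
    (hf : ∀ u v, f u v = f v u) (A B : ℝ)
    (hA : ∀ i : Fin n, f none (some i) = A)
    (hB : ∀ i j : Fin n, (wheelGraph n).Adj (some i) (some j) → f (some i) (some j) = B) :
    edgeSum (wheelGraph n) f hf = n * A + n * B := by
  unfold edgeSum
  exact @sum_edges_wheel n hn (Classical.decRel _) (Sym2.lift ⟨f, hf⟩) A B (fun i => by simpa using hA i)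
    (fun i j h => by simpa using hB i j h)

/-- For the wheel graph `Wₙ` (`n ≥ 3`), which has `n+1` vertices and `2n` edges:
`RLKV₁ = n(324n² + 3ⁿ(3ⁿ + 9n))`, `RLKV₂ = n(162n² + 3ⁿ(3ⁿ − 9n))`,
`RLKV₃ = n(81n² + (9n + 1)·3ⁿ − 9n)`, `RLKV₄ = n·|3ⁿ − 9n|·3ⁿ·9n`. -/
theorem RLKV_wheelGraph (n : ℕ) (hn : 3 ≤ n) :
    RLKV1 (wheelGraph n) = n * (324 * (n : ℝ) ^ 2 + 3 ^ n * ((3 : ℝ) ^ n + 9 * n)) ∧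
      RLKV2 (wheelGraph n) = n * (162 * (n : ℝ) ^ 2 + 3 ^ n * ((3 : ℝ) ^ n - 9 * n)) ∧
      RLKV3 (wheelGraph n) = n * (81 * (n : ℝ) ^ 2 + (9 * (n : ℝ) + 1) * 3 ^ n - 9 * n) ∧
      RLKV4 (wheelGraph n) = n * |(3 : ℝ) ^ n - 9 * n| * 3 ^ n * (9 * n) := by
  have hpos := nine_mul_le_pow hn
  refine ⟨?_, ?_, ?_, ?_⟩
  · unfold RLKV1
    rw [edgeSum_wheel hn _ _ (((3:ℝ)^n)^2 + (9*n)^2 + 3^n*(9*n))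
      ((9*(n:ℝ))^2 + (9*n)^2 + (9*n)*(9*n))
      (fun i => by rw [mdeg_wheel_none hn, mdeg_wheel_some hn])
      (fun i j _ => by rw [mdeg_wheel_some hn, mdeg_wheel_some hn])]
    ring
  · unfold RLKV2
    rw [edgeSum_wheel hn _ _ (((3:ℝ)^n)^2 + (9*n)^2 - 3^n*(9*n))
      ((9*(n:ℝ))^2 + (9*n)^2 - (9*n)*(9*n))
      (fun i => by rw [mdeg_wheel_none hn, mdeg_wheel_some hn])
      (fun i j _ => by rw [mdeg_wheel_some hn, mdeg_wheel_some hn])]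
    ring
  · unfold RLKV3
    rw [edgeSum_wheel hn _ _ (((3:ℝ)^n - 9*n) + 3^n*(9*n)) ((9*(n:ℝ))*(9*n))
      (fun i => by
        rw [mdeg_wheel_none hn, mdeg_wheel_some hn,
          abs_of_nonneg (by linarith)])
      (fun i j _ => by
        rw [mdeg_wheel_some hn, mdeg_wheel_some hn, sub_self, abs_zero,
          zero_add])]
    ring
  · unfold RLKV4
    rw [edgeSum_wheel hn _ _ (|(3:ℝ)^n - 9*n| * (3^n*(9*n))) 0
      (fun i => by rw [mdeg_wheel_none hn, mdeg_wheel_some hn])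
      (fun i j _ => by
        rw [mdeg_wheel_some hn, mdeg_wheel_some hn, sub_self, abs_zero,
          zero_mul])]
    ring
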